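/- arXiv:1304.0852 — 2 statements merged into one kernel-verified Lean document; each statement's English description precedes it below -/
import Mathlib

section
/- Assume m ≥ 2. Let v ∈ V with v ≠ 0 and let G_v = {g ∈ G : g v = v} be its stabilizer in G = Sp(V). Then G_v has exactly 2q − 1 orbits on V∖{0}. -/
set_option synthInstance.maxHeartbeats 1000000
set_option maxHeartbeats 1000000

open scoped BigOperators

/-- The field with `2^f` elements (`q = 2^f`). -/
abbrev Fq (f : ℕ) : Type := GaloisField 2 f

/-- The natural `2m`-dimensional symplectic space over `Fq f`. -/
abbrev V (f m : ℕ) : Type := (Fin m → Fq f) × (Fin m → Fq f)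

/-- The standard nondegenerate alternating bilinear form
`B((x,y),(x',y')) = ∑ i, (x i * y' i + y i * x' i)`. -/
noncomputable def B {f m : ℕ} (u w : V f m) : Fq f :=
  ∑ i, (u.1 i * w.2 i + u.2 i * w.1 i)

/-- The symplectic group `Sp_{2m}(2^f)`: the invertible linear maps preserving `B`. -/
def Sp (f m : ℕ) : Subgroup ((V f m →ₗ[Fq f] V f m)ˣ) where
  carrier := {g | ∀ u w : V f m,
    B ((g : V f m →ₗ[Fq f] V f m) u) ((g : V f m →ₗ[Fq f] V f m) w) = B u w}
  one_mem' := by intro u w; simp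
  mul_mem' := by
    intro g h hg hh u w
    simp only [Units.val_mul, Module.End.mul_apply]
    rw [hg, hh]
  inv_mem' := by
    intro g hg u w
    have := hg (((g⁻¹ : _ˣ) : V f m →ₗ[Fq f] V f m) u)
      (((g⁻¹ : _ˣ) : V f m →ₗ[Fq f] V f m) w)
    simpa [← Module.End.mul_apply, ← Units.val_mul] using this.symm

/-- The natural action of the symplectic group on `V` by matrix multiplication. -/
noncomputable instance {f m : ℕ} : MulAction (Sp f m) (V f m) where
  smul g v := ((g : (V f m →ₗ[Fq f] V f m)ˣ) : V f m →ₗ[Fq f] V f m) v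
  one_smul v := by simp [HSMul.hSMul, SMul.smul]
  mul_smul g h v := by simp [HSMul.hSMul, SMul.smul, Units.val_mul]

namespace SpAux

variable {f m : ℕ}

lemma two_eq_zero : (2 : Fq f) = 0 := by
  have := CharP.cast_eq_zero (Fq f) 2
  exact_mod_cast this

lemma add_self_fq (a : Fq f) : a + a = 0 := by
  rw [← two_mul, two_eq_zero, zero_mul]

lemma vadd_self (x : V f m) : x + x = 0 := by
  rw [← two_smul (Fq f) x, two_eq_zero, zero_smul]

lemma B_symm (u w : V f m) : B u w = B w u := by
  unfold B
  exact Finset.sum_congr rfl fun i _ => by ring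

lemma B_self (u : V f m) : B u u = 0 := by
  unfold B
  exact Finset.sum_eq_zero fun i _ => by rw [mul_comm]; exact add_self_fq _

lemma B_add_left (x y z : V f m) : B (x + y) z = B x z + B y z := by
  unfold B
  rw [← Finset.sum_add_distrib]
  exact Finset.sum_congr rfl fun i _ => by
    simp only [Prod.fst_add, Prod.snd_add, Pi.add_apply]; ring

lemma B_add_right (x y z : V f m) : B x (y + z) = B x y + B x z := by
  rw [B_symm, B_add_left, B_symm y x, B_symm z x]

lemma B_smul_left (a : Fq f) (x z : V f m) : B (a • x) z = a * B x z := by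
  unfold B
  rw [Finset.mul_sum]
  exact Finset.sum_congr rfl fun i _ => by
    simp only [Prod.smul_fst, Prod.smul_snd, Pi.smul_apply, smul_eq_mul]; ring

lemma B_smul_right (a : Fq f) (x z : V f m) : B x (a • z) = a * B x z := by
  rw [B_symm, B_smul_left, B_symm]

noncomputable def Bl : V f m →ₗ[Fq f] V f m →ₗ[Fq f] Fq f :=
  LinearMap.mk₂ (Fq f) B B_add_left (fun a x z => B_smul_left a x z)
    B_add_right (fun a x z => B_smul_right a x z)

@[simp] lemma Bl_apply (u w : V f m) : Bl u w = B u w := rfl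

lemma B_nondeg {u : V f m} (h : ∀ w, B u w = 0) : u = 0 := by
  ext j
  · have := h (0, Pi.single j 1)
    unfold B at this
    simpa [Pi.single_apply, Finset.sum_ite_eq'] using this
  · have := h (Pi.single j 1, 0)
    unfold B at this
    simpa [Pi.single_apply, Finset.sum_ite_eq'] using this

lemma Bl_injective : Function.Injective (Bl : V f m →ₗ[Fq f] V f m →ₗ[Fq f] Fq f) := by
  rw [← LinearMap.ker_eq_bot]
  rw [LinearMap.ker_eq_bot']
  intro u hu
  exact B_nondeg fun w => by
    have := LinearMap.congr_fun hu w
    exact this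

/-- Transvection-like map. -/
noncomputable def Tl (w : V f m) (l : Fq f) : V f m →ₗ[Fq f] V f m :=
  LinearMap.id + LinearMap.smulRight (l • (Bl.flip w)) w

lemma Tl_apply (w : V f m) (l : Fq f) (x : V f m) :
    Tl w l x = x + (l * B x w) • w := rfl

lemma Tl_Tl (w : V f m) (l : Fq f) (x : V f m) : Tl w l (Tl w l x) = x := by
  simp only [Tl_apply, B_add_left, B_smul_left, B_self, mul_zero, add_zero]
  rw [add_assoc, vadd_self, add_zero]

noncomputable def Tu (w : V f m) (l : Fq f) : (V f m →ₗ[Fq f] V f m)ˣ where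
  val := Tl w l
  inv := Tl w l
  val_inv := LinearMap.ext fun x => Tl_Tl w l x
  inv_val := LinearMap.ext fun x => Tl_Tl w l x

lemma Tu_mem (w : V f m) (l : Fq f) : Tu w l ∈ Sp f m := by
  intro u₁ w₁
  show B (Tl w l u₁) (Tl w l w₁) = B u₁ w₁
  simp only [Tl_apply, B_add_left, B_add_right, B_smul_left, B_smul_right, B_self,
    mul_zero, add_zero]
  rw [B_symm w w₁]
  linear_combination add_self_fq (l * B u₁ w * B w₁ w)

section Rel

variable (v : V f m)

/-- The relation "same orbit under the stabilizer of `v`". -/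
def SRel (u u' : V f m) : Prop := ∃ g : Sp f m, g • v = v ∧ g • u = u'

variable {v}

lemma smul_def (g : Sp f m) (u : V f m) :
    g • u = ((g : (V f m →ₗ[Fq f] V f m)ˣ) : V f m →ₗ[Fq f] V f m) u := rfl

lemma srel_refl (u : V f m) : SRel v u u := ⟨1, by simp [smul_def], by simp [smul_def]⟩

lemma srel_symm {u u' : V f m} (h : SRel v u u') : SRel v u' u := by
  obtain ⟨g, hgv, hgu⟩ := h
  exact ⟨g⁻¹, by rw [← hgv, inv_smul_smul, hgv], by rw [← hgu, inv_smul_smul]⟩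

lemma srel_trans {u u' u'' : V f m} (h : SRel v u u') (h' : SRel v u' u'') :
    SRel v u u'' := by
  obtain ⟨g, hgv, hgu⟩ := h
  obtain ⟨g', hgv', hgu'⟩ := h'
  exact ⟨g' * g, by rw [mul_smul, hgv, hgv'], by rw [mul_smul, hgu, hgu']⟩

lemma srel_B {u u' : V f m} (h : SRel v u u') : B v u' = B v u := by
  obtain ⟨g, hgv, hgu⟩ := h
  have := g.2 v u
  rw [← smul_def, ← smul_def, hgv, hgu] at this
  exact this

lemma smul_smul_comm (g : Sp f m) (a : Fq f) (x : V f m) :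
    g • (a • x) = a • (g • x) := by
  rw [smul_def, smul_def, map_smul]

lemma srel_span {u : V f m} {a : Fq f} (h : SRel v u (a • v)) : u = a • v := by
  obtain ⟨g, hgv, hgu⟩ := srel_symm h
  rw [← hgu, smul_smul_comm, hgv]

lemma srel_of_transvection {w : V f m} (l : Fq f) (hw : B v w = 0) (u : V f m) :
    SRel v u (Tl w l u) := by
  refine ⟨⟨Tu w l, Tu_mem w l⟩, ?_, rfl⟩
  show Tl w l v = v
  rw [Tl_apply, hw, mul_zero, zero_smul, add_zero]

lemma stepA {u u' : V f m} (hvu : B v u = B v u') (h : B u u' ≠ 0) : SRel v u u' := by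
  have h0 : B v (u + u') = 0 := by
    rw [B_add_right, hvu, add_self_fq]
  have := srel_of_transvection (v := v) (B u u')⁻¹ h0 u
  have heq : Tl (u + u') (B u u')⁻¹ u = u' := by
    rw [Tl_apply, B_add_right, B_self, zero_add, inv_mul_cancel₀ h, one_smul,
      ← add_assoc, vadd_self, zero_add]
  rwa [heq] at this

end Rel

open Submodule in
lemma exists_forall_B_eq {k : ℕ} (w : Fin k → V f m)
    (hw : LinearIndependent (Fq f) w) (c : Fin k → Fq f) :
    ∃ x, ∀ i, B (w i) x = c i := by
  classical
  set L : Fin k → (V f m →ₗ[Fq f] Fq f) := fun i => Bl (w i) with hL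
  have hLi : LinearIndependent (Fq f) L :=
    hw.map' Bl (LinearMap.ker_eq_bot.2 Bl_injective)
  have key : ∀ i, ∃ x, L i x = 1 ∧ ∀ j, j ≠ i → L j x = 0 := by
    intro i
    have h1 : ¬ (⨅ (j : {j : Fin k // j ≠ i}), LinearMap.ker (L j) ≤ LinearMap.ker (L i)) := by
      intro hle
      have hsp := mem_span_of_iInf_ker_le_ker (L := fun j : {j : Fin k // j ≠ i} => L j) hle
      have hr : Set.range (fun j : {j : Fin k // j ≠ i} => L j) = L '' {j | j ≠ i} := by
        ext y
        simp [Set.range_comp (g := L) (f := fun j : {j : Fin k // j ≠ i} => (j : Fin k)),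
          Subtype.range_coe]
      rw [hr] at hsp
      exact hLi.notMem_span_image (s := {j | j ≠ i}) (by simp) hsp
    rw [SetLike.not_le_iff_exists] at h1
    obtain ⟨x, hx1, hx2⟩ := h1
    have hx2' : L i x ≠ 0 := hx2
    refine ⟨(L i x)⁻¹ • x, ?_, fun j hj => ?_⟩
    · rw [map_smul, smul_eq_mul, inv_mul_cancel₀ hx2']
    · have : x ∈ LinearMap.ker (L j) := by
        have := Submodule.mem_iInf
          (fun j : {j : Fin k // j ≠ i} => LinearMap.ker (L j)) (x := x)
        exact (this.1 hx1) ⟨j, hj⟩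
      rw [map_smul, LinearMap.mem_ker.1 this, smul_zero]
  choose e he1 he2 using key
  refine ⟨∑ j, c j • e j, fun i => ?_⟩
  show L i (∑ j, c j • e j) = c i
  rw [map_sum]
  rw [Finset.sum_eq_single i]
  · rw [map_smul, he1, smul_eq_mul, mul_one]
  · intro j _ hj
    rw [map_smul, he2 j i (fun h => hj (by rw [h])), smul_zero]
  · intro h; exact absurd (Finset.mem_univ i) h

lemma bridge {v u u' : V f m} (hv : v ≠ 0) (hu : ∀ a : Fq f, a • v ≠ u)
    (hu' : ∀ a : Fq f, a • v ≠ u') (h0 : B u u' = 0) :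
    ∃ x, B v x = B v u ∧ B u x ≠ 0 ∧ B u' x ≠ 0 := by
  classical
  have hpair : LinearIndependent (Fq f) ![v, u] := (LinearIndependent.pair_iff' hv).2 hu
  by_cases hind : LinearIndependent (Fq f) ![v, u, u']
  · obtain ⟨x, hx⟩ := exists_forall_B_eq ![v, u, u'] hind ![B v u, 1, 1]
    have hx0 : B v x = B v u := by simpa using hx 0
    have hx1 : B u x = 1 := by simpa using hx 1
    have hx2 : B u' x = 1 := by simpa using hx 2
    exact ⟨x, hx0, by rw [hx1]; exact one_ne_zero, by rw [hx2]; exact one_ne_zero⟩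
  · have hsnoc : ![v, u, u'] = Fin.snoc ![v, u] u' := by
      funext i; fin_cases i <;> simp [Fin.snoc] <;> rfl
    rw [hsnoc, linearIndependent_fin_snoc] at hind
    push_neg at hind
    have hmem : u' ∈ Submodule.span (Fq f) {v, u} := by
      have h' := hind hpair
      rwa [Matrix.range_cons_cons_empty] at h'
    obtain ⟨a, b, hab⟩ := Submodule.mem_span_pair.1 hmem
    have hb : b ≠ 0 := by
      rintro rfl
      rw [zero_smul, add_zero] at hab
      exact hu' a hab
    have hac : a * B v u = 0 := by
      have h1 : B u u' = a * B v u := by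
        rw [← hab, B_add_right, B_smul_right, B_smul_right, B_self, mul_zero,
          add_zero, B_symm u v]
      rw [← h1, h0]
    obtain ⟨x, hx⟩ := exists_forall_B_eq ![v, u] hpair ![B v u, 1]
    have hx0 : B v x = B v u := by simpa using hx 0
    have hx1 : B u x = 1 := by simpa using hx 1
    refine ⟨x, hx0, by rw [hx1]; exact one_ne_zero, ?_⟩
    have h2 : B u' x = a * B v x + b * B u x := by
      rw [← hab, B_add_left, B_smul_left, B_smul_left]
    rw [h2, hx0, hx1, mul_one, hac, zero_add]
    exact hb

lemma rel_of_not_span {v u u' : V f m} (hv : v ≠ 0) (hu : ∀ a : Fq f, a • v ≠ u)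
    (hu' : ∀ a : Fq f, a • v ≠ u') (hc : B v u = B v u') : SRel v u u' := by
  by_cases h0 : B u u' = 0
  · obtain ⟨x, hx1, hx2, hx3⟩ := bridge hv hu hu' h0
    refine srel_trans (stepA hx1.symm hx2) (stepA ?_ ?_)
    · rw [hx1, hc]
    · rw [B_symm]; exact hx3
  · exact stepA hc h0

lemma exists_rep {v : V f m} (hv : v ≠ 0) (hm : 2 ≤ m) (c : Fq f) :
    ∃ u, B v u = c ∧ ∀ a : Fq f, a • v ≠ u := by
  classical
  have hne : ∃ u₁, B v u₁ ≠ 0 := by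
    by_contra h
    push_neg at h
    exact hv (B_nondeg h)
  obtain ⟨u₁, hu₁⟩ := hne
  by_cases hc : c = 0
  · -- take a nonzero element of ker (Bl v) ⊓ ker (Bl u₁)
    set φ : V f m →ₗ[Fq f] (Fq f × Fq f) := (Bl v).prod (Bl u₁) with hφ
    have hker : LinearMap.ker φ ≠ ⊥ := by
      intro hbot
      have hinj : Function.Injective φ := LinearMap.ker_eq_bot.1 hbot
      have hle := LinearMap.finrank_le_finrank_of_injective hinj
      have h1 : Module.finrank (Fq f) (V f m) = m + m := by
        rw [Module.finrank_prod, Module.finrank_pi, Fintype.card_fin]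
      have h2 : Module.finrank (Fq f) (Fq f × Fq f) = 2 := by
        rw [Module.finrank_prod, Module.finrank_self]
      rw [h1, h2] at hle
      omega
    obtain ⟨x, hx, hx0⟩ := Submodule.exists_mem_ne_zero_of_ne_bot hker
    have hxv : B v x = 0 := by
      have := congrArg Prod.fst (LinearMap.mem_ker.1 hx)
      exact this
    have hxu : B u₁ x = 0 := by
      have := congrArg Prod.snd (LinearMap.mem_ker.1 hx)
      exact this
    refine ⟨x, by rw [hxv, hc], fun a ha => ?_⟩
    have : B u₁ x = a * B u₁ v := by rw [← ha, B_smul_right]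
    rw [hxu, B_symm u₁ v] at this
    rcases mul_eq_zero.1 this.symm with h | h
    · rw [h, zero_smul] at ha
      exact hx0 ha.symm
    · exact hu₁ h
  · refine ⟨(c * (B v u₁)⁻¹) • u₁, ?_, fun a ha => ?_⟩
    · rw [B_smul_right, mul_assoc, inv_mul_cancel₀ hu₁, mul_one]
    · have : B v ((c * (B v u₁)⁻¹) • u₁) = 0 := by
        rw [← ha, B_smul_right, B_self, mul_zero]
      rw [B_smul_right, mul_assoc, inv_mul_cancel₀ hu₁, mul_one] at this
      exact hc this

end SpAux

/-- For `m ≥ 2` and a nonzero vector `v`, the stabilizer `G_v` of `v` in `Sp_{2m}(2^f)` has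
exactly `2q - 1` orbits on `V \ {0}` (where `q = 2^f`); i.e. there are exactly `2q - 1`
distinct `G_v`-orbits of nonzero vectors. -/
theorem stabilizer_orbits_card
    (f m : ℕ) (hf : 1 ≤ f) (hm : 2 ≤ m) (v : V f m) (hv : v ≠ 0) :
    Nat.card {s : Set (V f m) | ∃ u : V f m, u ≠ 0 ∧
      s = {u' | ∃ g : Sp f m, g • v = v ∧ g • u = u'}} = 2 * 2 ^ f - 1 := by
  classical
  choose w hw1 hw2 using fun c => SpAux.exists_rep hv hm c
  let I : Type := Fq f ⊕ {a : Fq f // a ≠ 0}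
  let rep : I → V f m := Sum.elim w fun a => (a : Fq f) • v
  have hrep_ne : ∀ i, rep i ≠ 0 := by
    rintro (c | a) h
    · exact hw2 c 0 (by rw [zero_smul]; exact h.symm)
    · rcases smul_eq_zero.1 h with h' | h'
      · exact a.2 h'
      · exact hv h'
  let orb : V f m → Set (V f m) := fun u => {u' | SpAux.SRel v u u'}
  have horb_eq : ∀ {u u' : V f m}, SpAux.SRel v u u' → orb u = orb u' := by
    intro u u' h
    ext x
    exact ⟨fun hx => SpAux.srel_trans (SpAux.srel_symm h) hx,
      fun hx => SpAux.srel_trans h hx⟩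
  let S := {s : Set (V f m) | ∃ u : V f m, u ≠ 0 ∧
      s = {u' | ∃ g : Sp f m, g • v = v ∧ g • u = u'}}
  let F : I → S := fun i => ⟨orb (rep i), rep i, hrep_ne i, rfl⟩
  have hinj : Function.Injective F := by
    intro i j hij
    have hset : orb (rep i) = orb (rep j) := congrArg Subtype.val hij
    have hrel : SpAux.SRel v (rep i) (rep j) := by
      have h1 : rep j ∈ orb (rep j) := SpAux.srel_refl _
      rw [← hset] at h1
      exact h1
    rcases i with c | a <;> rcases j with c' | a'
    · have hB := SpAux.srel_B hrel
      have hc : B v (w c') = B v (w c) := hB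
      rw [hw1, hw1] at hc
      exact congrArg Sum.inl hc.symm
    · exact absurd (SpAux.srel_span hrel).symm (hw2 c a')
    · exact absurd (SpAux.srel_span (SpAux.srel_symm hrel)).symm (hw2 c' a)
    · have h' : (a : Fq f) • v = (a' : Fq f) • v := SpAux.srel_span hrel
      exact congrArg Sum.inr (Subtype.ext (smul_left_injective (Fq f) hv h'))
  have hsurj : Function.Surjective F := by
    rintro ⟨s, u, hu0, hs⟩
    by_cases h : ∃ a : Fq f, a • v = u
    · obtain ⟨a, ha⟩ := h
      have ha0 : a ≠ 0 := by
        rintro rfl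
        rw [zero_smul] at ha
        exact hu0 ha.symm
      refine ⟨Sum.inr ⟨a, ha0⟩, Subtype.ext ?_⟩
      show orb ((a : Fq f) • v) = s
      rw [hs, ha]
      rfl
    · push_neg at h
      refine ⟨Sum.inl (B v u), Subtype.ext ?_⟩
      show orb (w (B v u)) = s
      rw [hs]
      exact horb_eq (SpAux.rel_of_not_span hv (hw2 _) h (by rw [hw1]))
  have hcard : Nat.card I = Nat.card S := Nat.card_eq_of_bijective F ⟨hinj, hsurj⟩
  have h1 : Nat.card (Fq f) = 2 ^ f := GaloisField.card 2 f (by omega)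
  have h2 : Nat.card {a : Fq f // a ≠ 0} = 2 ^ f - 1 := by
    rw [← Nat.card_congr (unitsEquivNeZero (G₀ := Fq f)), Nat.card_units, h1]
  have h3 : Nat.card I = 2 ^ f + (2 ^ f - 1) := by
    rw [Nat.card_sum, h1, h2]
  have hpow : 1 ≤ 2 ^ f := Nat.one_le_two_pow
  have : Nat.card S = 2 * 2 ^ f - 1 := by
    rw [← hcard, h3]; omega
  exact this
end

section
/- Assume m ≥ 2. Let Γ be the simple graph whose vertices are the 1-dimensional F-subspaces of V, with two distinct subspaces W, W' adjacent if and only if B(w, w') = 0 for all w ∈ W and w' ∈ W'. Then Γ is strongly regular with parameters ( (q^(2m)−1)/(q−1), (q^(2m−1)−q)/(q−1), (q^(2m−2)−1)/(q−1) − 2, (q^(2m−2)−1)/(q−1) ). -/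
set_option synthInstance.maxHeartbeats 1000000
set_option maxHeartbeats 1000000

open scoped BigOperators

lemma B_comm {f m : ℕ} (u w : V f m) : B u w = B w u :=
  Finset.sum_congr rfl fun i _ => by ring

/-- The graph on the `1`-dimensional subspaces of `V`, two distinct subspaces being adjacent
when they are orthogonal with respect to `B`. -/
noncomputable def perpGraph (f m : ℕ) :
    SimpleGraph {W : Submodule (Fq f) (V f m) // Module.finrank (Fq f) W = 1} where
  Adj W W' := W ≠ W' ∧
    ∀ w ∈ (W : Submodule (Fq f) (V f m)), ∀ w' ∈ (W' : Submodule (Fq f) (V f m)), B w w' = 0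
  symm := ⟨by
    rintro W W' ⟨hne, h⟩
    exact ⟨hne.symm, fun w hw w' hw' => (B_comm w w').trans (h w' hw' w hw)⟩⟩
  loopless := ⟨fun W h => h.1 rfl⟩

noncomputable instance (f m : ℕ) :
    Fintype {W : Submodule (Fq f) (V f m) // Module.finrank (Fq f) W = 1} :=
  Fintype.ofFinite _

/-! ### Auxiliary material -/

open Module Submodule LinearMap

noncomputable instance (f : ℕ) : Fintype (Fq f) := Fintype.ofFinite _
noncomputable instance (f m : ℕ) : Fintype (V f m) := Fintype.ofFinite _

lemma Fq_card (f : ℕ) (hf : 1 ≤ f) : Fintype.card (Fq f) = 2 ^ f := by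
  rw [← Nat.card_eq_fintype_card]
  exact GaloisField.card 2 f (by omega)

/-- `B` as a bilinear map. -/
noncomputable def Bl (f m : ℕ) : V f m →ₗ[Fq f] V f m →ₗ[Fq f] Fq f :=
  LinearMap.mk₂ (Fq f) B
    (fun u u' w => by
      simp only [B, Prod.fst_add, Prod.snd_add, Pi.add_apply, ← Finset.sum_add_distrib]
      exact Finset.sum_congr rfl fun i _ => by ring)
    (fun a u w => by
      simp only [B, Prod.smul_fst, Prod.smul_snd, Pi.smul_apply, smul_eq_mul, Finset.mul_sum]
      exact Finset.sum_congr rfl fun i _ => by ring)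
    (fun u w w' => by
      simp only [B, Prod.fst_add, Prod.snd_add, Pi.add_apply, ← Finset.sum_add_distrib]
      exact Finset.sum_congr rfl fun i _ => by ring)
    (fun a u w => by
      simp only [B, Prod.smul_fst, Prod.smul_snd, Pi.smul_apply, smul_eq_mul, Finset.mul_sum]
      exact Finset.sum_congr rfl fun i _ => by ring)

@[simp] lemma Bl_apply {f m : ℕ} (u w : V f m) : Bl f m u w = B u w := rfl

lemma B_self {f m : ℕ} (u : V f m) : B u u = 0 :=
  Finset.sum_eq_zero fun i _ => by rw [mul_comm]; exact CharTwo.add_self_eq_zero _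

lemma B_smul_left {f m : ℕ} (a : Fq f) (v u : V f m) : B (a • v) u = a * B v u := by
  have h := LinearMap.congr_fun (map_smul (Bl f m) a v) u
  rw [LinearMap.smul_apply, smul_eq_mul] at h
  exact h

lemma B_nondeg {f m : ℕ} (v : V f m) (h : ∀ u, B v u = 0) : v = 0 := by
  obtain ⟨x, y⟩ := v
  have hx : ∀ i, x i = 0 := by
    intro i
    have := h (0, Pi.single i 1)
    simpa [B, Pi.single_apply, mul_ite, Finset.sum_ite_eq'] using this
  have hy : ∀ i, y i = 0 := by
    intro i
    have := h (Pi.single i 1, 0)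
    simpa [B, Pi.single_apply, mul_ite, Finset.sum_ite_eq'] using this
  ext i <;> simp [hx, hy]

lemma finrank_V (f m : ℕ) : Module.finrank (Fq f) (V f m) = 2 * m := by
  rw [Module.finrank_prod, Module.finrank_fintype_fun_eq_card, Fintype.card_fin]
  ring

lemma Bl_ne_zero {f m : ℕ} {v : V f m} (hv : v ≠ 0) : Bl f m v ≠ 0 := by
  intro h
  exact hv (B_nondeg v fun u => by simpa using congrArg (fun g => g u) h)

lemma finrank_ker_Bl {f m : ℕ} {v : V f m} (hv : v ≠ 0) :
    finrank (Fq f) (LinearMap.ker (Bl f m v)) = 2 * m - 1 := by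
  have hsurj : Function.Surjective (Bl f m v) :=
    surjective_of_nonzero_of_finrank_eq_one (finrank_self (Fq f)) (Bl_ne_zero hv)
  have h1 : finrank (Fq f) (LinearMap.range (Bl f m v)) = 1 := by
    rw [LinearMap.range_eq_top.2 hsurj, finrank_top, finrank_self]
  have := LinearMap.finrank_range_add_finrank_ker (Bl f m v)
  rw [h1, finrank_V] at this
  omega

/-- linear independence from distinct spans -/
lemma indep_of_span_ne {f m : ℕ} {v w : V f m} (hv : v ≠ 0) (hw : w ≠ 0)
    (hne : (((Fq f) ∙ v)) ≠ (((Fq f) ∙ w))) {a b : Fq f} (h : a • v + b • w = 0) : a = 0 ∧ b = 0 := by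
  have ha : a = 0 := by
    by_contra ha
    have h1 : a • v = -(b • w) := eq_neg_of_add_eq_zero_left h
    have hv' : v ∈ ((Fq f) ∙ w) := by
      have h2 : v = a⁻¹ • (a • v) := by rw [smul_smul, inv_mul_cancel₀ ha, one_smul]
      rw [h1, smul_neg, smul_smul] at h2
      exact Submodule.mem_span_singleton.2 ⟨-(a⁻¹ * b), by rw [neg_smul, ← h2]⟩
    apply hne
    apply Submodule.eq_of_le_of_finrank_le
    · rwa [Submodule.span_singleton_le_iff_mem]
    · rw [finrank_span_singleton hv, finrank_span_singleton hw]
  refine ⟨ha, ?_⟩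
  rw [ha, zero_smul, zero_add] at h
  exact (smul_eq_zero.1 h).resolve_right hw

lemma prod_surj {f m : ℕ} {v w : V f m} (hv : v ≠ 0) (hw : w ≠ 0)
    (hne : (((Fq f) ∙ v)) ≠ (((Fq f) ∙ w))) :
    Function.Surjective ((Bl f m v).prod (Bl f m w)) := by
  rw [← LinearMap.range_eq_top]
  by_contra hr
  set R := LinearMap.range ((Bl f m v).prod (Bl f m w)) with hR
  have hlt : finrank (Fq f) R < 2 := by
    have := Submodule.finrank_lt hr
    simpa [Module.finrank_prod] using this
  obtain ⟨p, hp⟩ : ∃ p : Fq f × Fq f, R ≤ ((Fq f) ∙ p) := by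
    rcases eq_or_ne R ⊥ with h | h
    · exact ⟨0, h ▸ bot_le⟩
    · obtain ⟨p, hpR, hp0⟩ := Submodule.exists_mem_ne_zero_of_ne_bot h
      refine ⟨p, ?_⟩
      have hle : ((Fq f) ∙ p) ≤ R := by rwa [Submodule.span_singleton_le_iff_mem]
      exact (Submodule.eq_of_le_of_finrank_le hle
        (by rw [finrank_span_singleton hp0]; omega)).ge
  obtain ⟨a, b⟩ := p
  have key : ∀ u, B (b • v + a • w) u = 0 := by
    intro u
    have hmem : ((Bl f m v).prod (Bl f m w)) u ∈ R := LinearMap.mem_range_self _ u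
    obtain ⟨c, hc⟩ := Submodule.mem_span_singleton.1 (hp hmem)
    have h1 : B v u = c * a := by
      have := congrArg Prod.fst hc
      simpa [LinearMap.prod_apply, Prod.smul_fst, smul_eq_mul] using this.symm
    have h2 : B w u = c * b := by
      have := congrArg Prod.snd hc
      simpa [LinearMap.prod_apply, Prod.smul_snd, smul_eq_mul] using this.symm
    have : B (b • v + a • w) u = b * B v u + a * B w u := by
      have := congrArg (fun g => g u) (map_add (Bl f m) (b • v) (a • w))
      simp only [Bl_apply] at this ⊢
      rw [this]
      have e1 := congrArg (fun g => g u) (map_smul (Bl f m) b v)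
      have e2 := congrArg (fun g => g u) (map_smul (Bl f m) a w)
      simp only [LinearMap.smul_apply, Bl_apply, smul_eq_mul] at e1 e2
      simp [e1, e2]
    rw [this, h1, h2]
    have : b * (c * a) = a * (c * b) := by ring
    rw [this]
    exact CharTwo.add_self_eq_zero _
  have h0 := B_nondeg _ key
  obtain ⟨hb, ha⟩ := indep_of_span_ne hv hw hne h0
  subst ha hb
  refine hv (B_nondeg v fun u => ?_)
  have h := hp (LinearMap.mem_range_self ((Bl f m v).prod (Bl f m w)) u)
  have h0 : ((Bl f m v).prod (Bl f m w)) u = 0 := by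
    simpa [Prod.mk_zero_zero, Prod.mk_eq_zero] using h
  have := congrArg Prod.fst h0
  simpa using this

lemma finrank_ker_prod {f m : ℕ} {v w : V f m} (hv : v ≠ 0) (hw : w ≠ 0)
    (hne : (((Fq f) ∙ v)) ≠ (((Fq f) ∙ w))) :
    finrank (Fq f) ((LinearMap.ker (Bl f m v)) ⊓ (LinearMap.ker (Bl f m w)) :
      Submodule (Fq f) (V f m)) = 2 * m - 2 := by
  have hs := prod_surj hv hw hne
  have h1 : finrank (Fq f) (LinearMap.range ((Bl f m v).prod (Bl f m w))) = 2 := by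
    rw [LinearMap.range_eq_top.2 hs, finrank_top, Module.finrank_prod, finrank_self]
  have := LinearMap.finrank_range_add_finrank_ker ((Bl f m v).prod (Bl f m w))
  rw [h1, finrank_V, LinearMap.ker_prod] at this
  omega

attribute [local instance] Classical.propDecidable

abbrev Line (f m : ℕ) := {W : Submodule (Fq f) (V f m) // Module.finrank (Fq f) W = 1}

open Finset in
lemma card_nonzero_of_submodule {f m : ℕ} (hf : 1 ≤ f) (W : Submodule (Fq f) (V f m)) :
    (univ.filter (fun x : V f m => x ∈ W ∧ x ≠ 0)).card
      = (2 ^ f) ^ (Module.finrank (Fq f) W) - 1 := by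
  have he : univ.filter (fun x : V f m => x ∈ W ∧ x ≠ 0)
      = (univ.filter (fun x : V f m => x ∈ W)).erase 0 := by
    ext x
    simp [mem_erase, and_comm]
  rw [he, Finset.card_erase_of_mem (by simp [W.zero_mem]), ← Fintype.card_subtype]
  congr 1
  rw [card_eq_pow_finrank (K := Fq f) (V := W), Fq_card f hf]

open Finset in
lemma card_lines_mul {f m : ℕ} (hf : 1 ≤ f) (S : Submodule (Fq f) (V f m)) :
    (univ.filter (fun W : Line f m => (W : Submodule (Fq f) (V f m)) ≤ S)).card * (2 ^ f - 1)
      = (2 ^ f) ^ (Module.finrank (Fq f) S) - 1 := by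
  set T : Finset (V f m) := univ.filter (fun x => x ∈ S ∧ x ≠ 0) with hT
  set L := univ.filter (fun W : Line f m => (W : Submodule (Fq f) (V f m)) ≤ S) with hL
  set t : Finset (Submodule (Fq f) (V f m)) := L.image Subtype.val with ht
  have H : ∀ x ∈ T, Submodule.span (Fq f) {x} ∈ t := by
    intro x hx
    rw [hT, mem_filter] at hx
    refine mem_image.2
      ⟨(⟨Submodule.span (Fq f) {x}, finrank_span_singleton hx.2.2⟩ : Line f m), ?_, rfl⟩
    rw [hL, mem_filter]
    exact ⟨mem_univ _, by rw [Submodule.span_singleton_le_iff_mem]; exact hx.2.1⟩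
  have hfib : ∀ W ∈ t, (T.filter (fun x => Submodule.span (Fq f) {x} = W)).card
      = 2 ^ f - 1 := by
    intro W hW
    obtain ⟨Wl, hWl, rfl⟩ := mem_image.1 hW
    rw [hL, mem_filter] at hWl
    have hfr : Module.finrank (Fq f) (Wl : Submodule (Fq f) (V f m)) = 1 := Wl.2
    have he : T.filter (fun x => Submodule.span (Fq f) {x} = (Wl : Submodule (Fq f) (V f m)))
        = univ.filter (fun x : V f m => x ∈ (Wl : Submodule (Fq f) (V f m)) ∧ x ≠ 0) := by
      ext x
      simp only [hT, mem_filter, mem_univ, true_and]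
      constructor
      · rintro ⟨⟨hxS, hx0⟩, hsp⟩
        exact ⟨hsp ▸ Submodule.mem_span_singleton_self x, hx0⟩
      · rintro ⟨hxW, hx0⟩
        refine ⟨⟨hWl.2 hxW, hx0⟩, ?_⟩
        apply Submodule.eq_of_le_of_finrank_le
        · rwa [Submodule.span_singleton_le_iff_mem]
        · rw [finrank_span_singleton hx0, hfr]
    rw [he, card_nonzero_of_submodule hf, hfr, pow_one]
  have hsum := Finset.card_eq_sum_card_fiberwise H
  have hTcard : T.card = (2 ^ f) ^ (Module.finrank (Fq f) S) - 1 :=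
    card_nonzero_of_submodule hf S
  have htL : t.card = L.card :=
    card_image_of_injOn (Set.injOn_of_injective Subtype.coe_injective)
  calc L.card * (2 ^ f - 1) = ∑ _W ∈ t, (2 ^ f - 1) := by rw [sum_const, htL, smul_eq_mul]
    _ = ∑ W ∈ t, (T.filter (fun x => Submodule.span (Fq f) {x} = W)).card :=
        (Finset.sum_congr rfl fun W hW => (hfib W hW).symm)
    _ = T.card := hsum.symm
    _ = _ := hTcard

lemma Line.exists_gen {f m : ℕ} (W : Line f m) :
    ∃ v : V f m, v ≠ 0 ∧ (W : Submodule (Fq f) (V f m)) = Submodule.span (Fq f) {v} := by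
  have hbot : (W : Submodule (Fq f) (V f m)) ≠ ⊥ := by
    intro h
    have := W.2
    rw [h, finrank_bot] at this
    omega
  obtain ⟨v, hvW, hv0⟩ := Submodule.exists_mem_ne_zero_of_ne_bot hbot
  refine ⟨v, hv0, ?_⟩
  have hle : (((Fq f) ∙ v)) ≤ (W : Submodule (Fq f) (V f m)) := by
    rwa [Submodule.span_singleton_le_iff_mem]
  exact (Submodule.eq_of_le_of_finrank_le hle
    (by rw [finrank_span_singleton hv0, W.2])).symm

lemma adj_iff_le_ker {f m : ℕ} {W W' : Line f m} {v : V f m}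
    (hW : (W : Submodule (Fq f) (V f m)) = Submodule.span (Fq f) {v}) :
    (perpGraph f m).Adj W W' ↔
      W' ≠ W ∧ (W' : Submodule (Fq f) (V f m)) ≤ LinearMap.ker (Bl f m v) := by
  constructor
  · rintro ⟨hne, h⟩
    refine ⟨hne.symm, fun w' hw' => ?_⟩
    rw [LinearMap.mem_ker, Bl_apply]
    exact h v (by rw [hW]; exact Submodule.mem_span_singleton_self v) w' hw'
  · rintro ⟨hne, hle⟩
    refine ⟨hne.symm, fun w hw w' hw' => ?_⟩
    rw [hW] at hw
    obtain ⟨a, rfl⟩ := Submodule.mem_span_singleton.1 hw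
    have h0 : B v w' = 0 := by
      have := hle hw'
      rwa [LinearMap.mem_ker, Bl_apply] at this
    rw [B_smul_left, h0, mul_zero]

lemma mem_span_gen {f m : ℕ} {W : Line f m} {v : V f m}
    (hW : (W : Submodule (Fq f) (V f m)) = Submodule.span (Fq f) {v}) :
    v ∈ (W : Submodule (Fq f) (V f m)) := by
  rw [hW]; exact Submodule.mem_span_singleton_self v

open Finset in
/-- The orthogonality graph on `1`-subspaces of the natural module of `Sp_{2m}(2^f)` is
strongly regular with parameters
`((q^{2m}-1)/(q-1), (q^{2m-1}-q)/(q-1), (q^{2m-2}-1)/(q-1) - 2, (q^{2m-2}-1)/(q-1))`,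
where `q = 2^f`. -/
theorem perpGraph_isSRG (f m : ℕ) (hf : 1 ≤ f) (hm : 2 ≤ m) :
    letI : DecidableRel (perpGraph f m).Adj := Classical.decRel _
    (perpGraph f m).IsSRGWith
      (((2 ^ f) ^ (2 * m) - 1) / (2 ^ f - 1))
      (((2 ^ f) ^ (2 * m - 1) - 2 ^ f) / (2 ^ f - 1))
      (((2 ^ f) ^ (2 * m - 2) - 1) / (2 ^ f - 1) - 2)
      (((2 ^ f) ^ (2 * m - 2) - 1) / (2 ^ f - 1)) := by
  have hq : 2 ≤ 2 ^ f := by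
    calc 2 = 2 ^ 1 := (pow_one 2).symm
    _ ≤ 2 ^ f := Nat.pow_le_pow_right (by omega) hf
  have hqpos : 0 < 2 ^ f - 1 := by omega
  refine ⟨?_, ?_, ?_, ?_⟩
  -- vertex count
  · have h := card_lines_mul (m := m) hf ⊤
    rw [show (univ.filter (fun W : Line f m => (W : Submodule (Fq f) (V f m)) ≤ ⊤)) = univ from
        filter_true_of_mem (fun _ _ => le_top), card_univ, finrank_top, finrank_V] at h
    exact (Nat.div_eq_of_eq_mul_left hqpos h.symm).symm
  -- regularity
  · intro W
    obtain ⟨v, hv0, hWv⟩ := Line.exists_gen W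
    have hK : finrank (Fq f) (LinearMap.ker (Bl f m v)) = 2 * m - 1 := finrank_ker_Bl hv0
    have hN := card_lines_mul hf (LinearMap.ker (Bl f m v))
    rw [hK] at hN
    set L := univ.filter
      (fun W' : Line f m => (W' : Submodule (Fq f) (V f m)) ≤ LinearMap.ker (Bl f m v)) with hL
    have hWmem : W ∈ L := by
      rw [hL, mem_filter]
      refine ⟨mem_univ _, ?_⟩
      rw [hWv, Submodule.span_singleton_le_iff_mem, LinearMap.mem_ker, Bl_apply]
      exact B_self v
    have hNe : (perpGraph f m).neighborFinset W = L.erase W := by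
      ext W'
      rw [SimpleGraph.mem_neighborFinset, adj_iff_le_ker hWv, mem_erase, hL, mem_filter]
      exact ⟨fun ⟨h1, h2⟩ => ⟨h1, mem_univ _, h2⟩, fun ⟨h1, _, h2⟩ => ⟨h1, h2⟩⟩
    rw [← SimpleGraph.card_neighborFinset_eq_degree, hNe, card_erase_of_mem hWmem]
    have hle : 2 ^ f ≤ (2 ^ f) ^ (2 * m - 1) := Nat.le_self_pow (by omega) _
    have h2 : (L.card - 1) * (2 ^ f - 1) = (2 ^ f) ^ (2 * m - 1) - 2 ^ f := by
      rw [Nat.sub_mul, hN, one_mul]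
      omega
    exact (Nat.div_eq_of_eq_mul_left hqpos h2.symm).symm
  -- adjacent pairs
  · intro W W' hadj
    obtain ⟨v, hv0, hWv⟩ := Line.exists_gen W
    obtain ⟨v', hv'0, hW'v'⟩ := Line.exists_gen W'
    obtain ⟨hne', hle'⟩ := (adj_iff_le_ker hWv).1 hadj
    have hB : B v v' = 0 := by
      have := hle' (mem_span_gen hW'v')
      rwa [LinearMap.mem_ker, Bl_apply] at this
    have hspan : ((Fq f) ∙ v) ≠ ((Fq f) ∙ v') := by
      rw [← hWv, ← hW'v']
      exact fun h => hne' (Subtype.ext h.symm)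
    set K : Submodule (Fq f) (V f m) :=
      (LinearMap.ker (Bl f m v)) ⊓ (LinearMap.ker (Bl f m v')) with hKdef
    have hK : finrank (Fq f) K = 2 * m - 2 := finrank_ker_prod hv0 hv'0 hspan
    have hN := card_lines_mul hf K
    rw [hK] at hN
    set L := univ.filter (fun u : Line f m => (u : Submodule (Fq f) (V f m)) ≤ K) with hL
    have hWmem : W ∈ L := by
      rw [hL, mem_filter]
      refine ⟨mem_univ _, ?_⟩
      rw [hWv, Submodule.span_singleton_le_iff_mem, hKdef, Submodule.mem_inf]
      constructor
      · rw [LinearMap.mem_ker, Bl_apply]; exact B_self v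
      · rw [LinearMap.mem_ker, Bl_apply, B_comm]; exact hB
    have hW'mem : W' ∈ L := by
      rw [hL, mem_filter]
      refine ⟨mem_univ _, ?_⟩
      rw [hW'v', Submodule.span_singleton_le_iff_mem, hKdef, Submodule.mem_inf]
      constructor
      · rw [LinearMap.mem_ker, Bl_apply]; exact hB
      · rw [LinearMap.mem_ker, Bl_apply]; exact B_self v'
    have hcard : Fintype.card ((perpGraph f m).commonNeighbors W W')
        = ((L.erase W).erase W').card := by
      apply Fintype.card_of_subtype
      intro u
      rw [mem_erase, mem_erase, SimpleGraph.mem_commonNeighbors,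
        adj_iff_le_ker hWv, adj_iff_le_ker hW'v', hL, mem_filter, hKdef, le_inf_iff]
      constructor
      · rintro ⟨h1, h2, _, h3, h4⟩
        exact ⟨⟨h2, h3⟩, ⟨h1, h4⟩⟩
      · rintro ⟨⟨h2, h3⟩, ⟨h1, h4⟩⟩
        exact ⟨h1, h2, mem_univ _, h3, h4⟩
    rw [hcard, card_erase_of_mem (mem_erase.2 ⟨hne', hW'mem⟩), card_erase_of_mem hWmem]
    have hNval : ((2 ^ f) ^ (2 * m - 2) - 1) / (2 ^ f - 1) = L.card :=
      Nat.div_eq_of_eq_mul_left hqpos hN.symm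
    rw [hNval]
    omega
  -- nonadjacent pairs
  · intro W W' hne hnadj
    obtain ⟨v, hv0, hWv⟩ := Line.exists_gen W
    obtain ⟨v', hv'0, hW'v'⟩ := Line.exists_gen W'
    have hB : B v v' ≠ 0 := by
      intro h0
      apply hnadj
      rw [adj_iff_le_ker hWv, hW'v', Submodule.span_singleton_le_iff_mem,
        LinearMap.mem_ker, Bl_apply]
      exact ⟨hne.symm, h0⟩
    have hspan : ((Fq f) ∙ v) ≠ ((Fq f) ∙ v') := by
      rw [← hWv, ← hW'v']
      exact fun h => hne (Subtype.ext h)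
    set K : Submodule (Fq f) (V f m) :=
      (LinearMap.ker (Bl f m v)) ⊓ (LinearMap.ker (Bl f m v')) with hKdef
    have hK : finrank (Fq f) K = 2 * m - 2 := finrank_ker_prod hv0 hv'0 hspan
    have hN := card_lines_mul hf K
    rw [hK] at hN
    set L := univ.filter (fun u : Line f m => (u : Submodule (Fq f) (V f m)) ≤ K) with hL
    have hcard : Fintype.card ((perpGraph f m).commonNeighbors W W') = L.card := by
      apply Fintype.card_of_subtype
      intro u
      rw [hL, mem_filter, SimpleGraph.mem_commonNeighbors,
        adj_iff_le_ker hWv, adj_iff_le_ker hW'v', hKdef, le_inf_iff]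
      constructor
      · rintro ⟨_, h3, h4⟩
        have huW : u ≠ W := by
          rintro rfl
          apply hB
          have := h4 (mem_span_gen hWv)
          rw [LinearMap.mem_ker, Bl_apply] at this
          rwa [B_comm]
        have huW' : u ≠ W' := by
          rintro rfl
          apply hB
          have := h3 (mem_span_gen hW'v')
          rwa [LinearMap.mem_ker, Bl_apply] at this
        exact ⟨⟨huW, h3⟩, ⟨huW', h4⟩⟩
      · rintro ⟨⟨h1, h3⟩, ⟨h2, h4⟩⟩
        exact ⟨mem_univ _, h3, h4⟩
    rw [hcard]
    exact (Nat.div_eq_of_eq_mul_left hqpos hN.symm).symm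
end
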